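/- Let m ≤ n be natural numbers, and let ι : EuclideanSpace ℂ (Fin m) →ₗᵢ[ℂ] EuclideanSpace ℂ (Fin n) be the standard inclusion, given by (ι x) i = x ⟨i, h⟩ if h : (i : ℕ) < m and (ι x) i = 0 otherwise. Consider the action of the group G(n) of ℂ-linear isometric equivalences of EuclideanSpace ℂ (Fin n) on linear isometries by postcomposition. Then the stabilizer subgroup { e ∈ G(n) | e ∘ ι = ι } is isomorphic, as a group, to the group G(n−m) of ℂ-linear isometric equivalences of EuclideanSpace ℂ (Fin (n−m)). -/

import Mathlib

open Submodule

noncomputable section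

variable {𝕜 E F : Type*} [RCLike 𝕜] [NormedAddCommGroup E] [InnerProductSpace 𝕜 E]
  [NormedAddCommGroup F] [InnerProductSpace 𝕜 F]

/-- Restriction of an isometric equivalence fixing `K` pointwise to `Kᗮ`. -/
def resOrth (K : Submodule 𝕜 E) [HasOrthogonalProjection K]
    (e : E ≃ₗᵢ[𝕜] E) (he : ∀ u ∈ K, e u = u) : Kᗮ ≃ₗᵢ[𝕜] Kᗮ where
  toFun v := ⟨e v, by
    rw [Submodule.mem_orthogonal]
    intro u hu
    have : (inner 𝕜 u (e v) : 𝕜) = inner 𝕜 (e u) (e v) := by rw [he u hu]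
    rw [this, e.inner_map_map]
    exact v.2 u hu⟩
  invFun v := ⟨e.symm v, by
    rw [Submodule.mem_orthogonal]
    intro u hu
    have h1 : e.symm u = u := by
      conv_lhs => rw [← he u hu]
      exact e.symm_apply_apply u
    have : (inner 𝕜 u ((e.symm) (v : E)) : 𝕜) = inner 𝕜 (e.symm u) (e.symm v) := by rw [h1]
    rw [this, e.symm.inner_map_map]
    exact v.2 u hu⟩
  map_add' a b := Subtype.ext (by simpa using e.map_add a b)
  map_smul' c a := Subtype.ext (by simpa using e.map_smul c (a : E))
  left_inv a := Subtype.ext (e.symm_apply_apply a)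
  right_inv a := Subtype.ext (e.apply_symm_apply a)
  norm_map' a := e.norm_map (a : E)

@[simp] lemma resOrth_apply (K : Submodule 𝕜 E) [HasOrthogonalProjection K]
    (e : E ≃ₗᵢ[𝕜] E) (he : ∀ u ∈ K, e u = u) (v : Kᗮ) :
    (resOrth K e he v : E) = e v := rfl

lemma resOrth_mul (K : Submodule 𝕜 E) [HasOrthogonalProjection K] (e f : E ≃ₗᵢ[𝕜] E)
    (he : ∀ u ∈ K, e u = u) (hf : ∀ u ∈ K, f u = u)
    (hef : ∀ u ∈ K, (e * f) u = u) :
    resOrth K (e * f) hef = resOrth K e he * resOrth K f hf := by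
  apply LinearIsometryEquiv.ext
  intro v
  apply Subtype.ext
  have h1 : (resOrth K e he * resOrth K f hf) v = resOrth K e he (resOrth K f hf v) := rfl
  rw [h1]
  simp [LinearIsometryEquiv.coe_mul]

/-- Extension of an isometric equivalence of `Kᗮ` by the identity on `K`. -/
def extFun (K : Submodule 𝕜 E) [HasOrthogonalProjection K]
    (g : Kᗮ ≃ₗᵢ[𝕜] Kᗮ) (x : E) : E :=
  (orthogonalProjection K x : E) + (g (orthogonalProjection Kᗮ x) : E)

lemma extFun_add_decomp (K : Submodule 𝕜 E) [HasOrthogonalProjection K]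
    (g : Kᗮ ≃ₗᵢ[𝕜] Kᗮ) (u : K) (v : Kᗮ) :
    extFun K g ((u : E) + (v : E)) = (u : E) + (g v : E) := by
  have hP : orthogonalProjection K ((u : E) + (v : E)) = u :=
    Subtype.ext (eq_starProjection_of_mem_orthogonal' u.2 v.2 rfl)
  have hQ : orthogonalProjection Kᗮ ((u : E) + (v : E)) = v :=
    Subtype.ext (eq_starProjection_of_mem_orthogonal' v.2
      (K.le_orthogonal_orthogonal u.2) (add_comm (u : E) (v : E)))
  simp [extFun, hP, hQ]

lemma extFun_norm (K : Submodule 𝕜 E) [HasOrthogonalProjection K]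
    (g : Kᗮ ≃ₗᵢ[𝕜] Kᗮ) (x : E) : ‖extFun K g x‖ = ‖x‖ := by
  set u := orthogonalProjection K x with hu
  set v := orthogonalProjection Kᗮ x with hv
  have hx : (u : E) + (v : E) = x := K.starProjection_add_starProjection_orthogonal x
  have h1 : ‖(u : E) + (g v : E)‖ * ‖(u : E) + (g v : E)‖
      = ‖(u : E)‖ * ‖(u : E)‖ + ‖(g v : E)‖ * ‖(g v : E)‖ :=
    norm_add_sq_eq_norm_sq_add_norm_sq_of_inner_eq_zero _ _ ((g v).2 u u.2)
  have h2 : ‖(u : E) + (v : E)‖ * ‖(u : E) + (v : E)‖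
      = ‖(u : E)‖ * ‖(u : E)‖ + ‖(v : E)‖ * ‖(v : E)‖ :=
    norm_add_sq_eq_norm_sq_add_norm_sq_of_inner_eq_zero _ _ (v.2 u u.2)
  have h3 : ‖(g v : E)‖ = ‖(v : E)‖ := g.norm_map v
  have h4 : ‖extFun K g x‖ * ‖extFun K g x‖ = ‖x‖ * ‖x‖ := by
    rw [extFun, ← hu, ← hv, h1, h3, ← h2, hx]
  nlinarith [norm_nonneg (extFun K g x), norm_nonneg x]

def extEquiv (K : Submodule 𝕜 E) [HasOrthogonalProjection K]
    (g : Kᗮ ≃ₗᵢ[𝕜] Kᗮ) : E ≃ₗᵢ[𝕜] E where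
  toFun := extFun K g
  map_add' a b := by simp [extFun, add_add_add_comm]
  map_smul' c a := by simp [extFun, smul_add]
  invFun := extFun K g.symm
  left_inv x := by
    show extFun K g.symm (extFun K g x) = x
    have hx : ((orthogonalProjection K x : E)) + ((orthogonalProjection Kᗮ x : E)) = x :=
      K.starProjection_add_starProjection_orthogonal x
    conv_lhs => rw [← hx, extFun_add_decomp, extFun_add_decomp]
    simp [hx]
  right_inv x := by
    show extFun K g (extFun K g.symm x) = x
    have hx : ((orthogonalProjection K x : E)) + ((orthogonalProjection Kᗮ x : E)) = x :=
      K.starProjection_add_starProjection_orthogonal x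
    conv_lhs => rw [← hx, extFun_add_decomp, extFun_add_decomp]
    simp [hx]
  norm_map' := extFun_norm K g

lemma extEquiv_fix (K : Submodule 𝕜 E) [HasOrthogonalProjection K]
    (g : Kᗮ ≃ₗᵢ[𝕜] Kᗮ) (u : E) (hu : u ∈ K) : extEquiv K g u = u := by
  have := extFun_add_decomp K g ⟨u, hu⟩ 0
  simpa [extEquiv] using this

lemma extEquiv_orth (K : Submodule 𝕜 E) [HasOrthogonalProjection K]
    (g : Kᗮ ≃ₗᵢ[𝕜] Kᗮ) (v : Kᗮ) : extEquiv K g (v : E) = (g v : E) := by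
  have := extFun_add_decomp K g 0 v
  simpa [extEquiv] using this

/-- Conjugation by an isometric equivalence gives a group isomorphism of isometry groups. -/
def conjIso {R E F : Type*} [Semiring R] [SeminormedAddCommGroup E] [SeminormedAddCommGroup F]
    [Module R E] [Module R F] (A : E ≃ₗᵢ[R] F) : (E ≃ₗᵢ[R] E) ≃* (F ≃ₗᵢ[R] F) where
  toFun e := (A.symm.trans e).trans A
  invFun f := (A.trans f).trans A.symm
  left_inv e := by ext x; simp
  right_inv f := by ext x; simp
  map_mul' e f := by
    ext x
    simp [LinearIsometryEquiv.coe_mul]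

@[simp] lemma extEquiv_apply (K : Submodule 𝕜 E) [HasOrthogonalProjection K]
    (g : Kᗮ ≃ₗᵢ[𝕜] Kᗮ) (x : E) : extEquiv K g x = extFun K g x := rfl

end




/-- The stabilizer, inside the group of `ℂ`-linear isometric equivalences of
`EuclideanSpace ℂ (Fin n)`, of a linear isometric embedding
`ι : EuclideanSpace ℂ (Fin m) →ₗᵢ[ℂ] EuclideanSpace ℂ (Fin n)` under the
postcomposition action. -/
noncomputable def stabilizerOfInclusion {m n : ℕ}
    (ι : EuclideanSpace ℂ (Fin m) →ₗᵢ[ℂ] EuclideanSpace ℂ (Fin n)) :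
    Subgroup (EuclideanSpace ℂ (Fin n) ≃ₗᵢ[ℂ] EuclideanSpace ℂ (Fin n)) where
  carrier := { e | ⇑e ∘ ⇑ι = ⇑ι }
  one_mem' := by
    funext x
    simp
  mul_mem' := by
    intro a b ha hb
    funext x
    have hbx := congrFun hb x
    have hax := congrFun ha x
    simp only [Function.comp_apply] at hbx hax ⊢
    simp only [LinearIsometryEquiv.coe_mul, Function.comp_apply]
    rw [hbx]
    simpa using hax
  inv_mem' := by
    intro a ha
    funext x
    have hax := congrFun ha x
    simp only [Function.comp_apply] at hax ⊢
    simp only [LinearIsometryEquiv.coe_inv]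
    have h2 : a.symm (a (ι x)) = ι x := a.symm_apply_apply _
    rw [hax] at h2
    exact h2


set_option maxHeartbeats 1000000 in
/-- The restriction isomorphism from the stabilizer to the isometry group of the
orthogonal complement of the range of `ι`. -/
noncomputable def stabMulEquiv {m n : ℕ}
    (ι : EuclideanSpace ℂ (Fin m) →ₗᵢ[ℂ] EuclideanSpace ℂ (Fin n)) :
    (stabilizerOfInclusion ι) ≃*
      ((LinearMap.range ι.toLinearMap)ᗮ ≃ₗᵢ[ℂ] (LinearMap.range ι.toLinearMap)ᗮ) :=
  letI K : Submodule ℂ (EuclideanSpace ℂ (Fin n)) := LinearMap.range ι.toLinearMap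
  have hfix : ∀ e : EuclideanSpace ℂ (Fin n) ≃ₗᵢ[ℂ] EuclideanSpace ℂ (Fin n),
      e ∈ stabilizerOfInclusion ι → ∀ u ∈ K, e u = u := by
    intro e he u hu
    obtain ⟨x, rfl⟩ := hu
    exact congrFun he x
  have hmemι : ∀ x, ι x ∈ K := fun x => ⟨x, rfl⟩
  { toFun := fun e => resOrth K e.1 (hfix e.1 e.2)
    invFun := fun g => ⟨extEquiv K g, by
      funext x
      simp only [Function.comp_apply]
      exact extEquiv_fix K g (ι x) (hmemι x)⟩
    left_inv := fun e => by
      apply Subtype.ext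
      apply LinearIsometryEquiv.ext
      intro x
      have hx : ((orthogonalProjection K x : EuclideanSpace ℂ (Fin n)))
          + ((orthogonalProjection Kᗮ x : EuclideanSpace ℂ (Fin n))) = x :=
        K.starProjection_add_starProjection_orthogonal x
      show extEquiv K (resOrth K e.1 (hfix e.1 e.2)) x = e.1 x
      conv_lhs => rw [← hx]
      rw [extEquiv_apply, extFun_add_decomp, resOrth_apply]
      conv_rhs => rw [← hx]
      rw [map_add, hfix e.1 e.2 _ (orthogonalProjection K x).2]
    right_inv := fun g => by
      apply LinearIsometryEquiv.ext
      intro v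
      apply Subtype.ext
      show (extEquiv K g (v : EuclideanSpace ℂ (Fin n)) : EuclideanSpace ℂ (Fin n))
        = (g v : EuclideanSpace ℂ (Fin n))
      exact extEquiv_orth K g v
    map_mul' := fun e f =>
      resOrth_mul K e.1 f.1 (hfix e.1 e.2) (hfix f.1 f.2) (hfix _ (mul_mem e.2 f.2)) }

/-- Any finite-dimensional complex inner product space of dimension `k` is isometric to
`EuclideanSpace ℂ (Fin k)`. -/
noncomputable def euclIso {V : Type*} [NormedAddCommGroup V] [InnerProductSpace ℂ V]
    [FiniteDimensional ℂ V] {k : ℕ} (h : Module.finrank ℂ V = k) :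
    V ≃ₗᵢ[ℂ] EuclideanSpace ℂ (Fin k) :=
  (stdOrthonormalBasis ℂ V).repr.trans (LinearIsometryEquiv.piLpCongrLeft 2 ℂ ℂ (finCongr h))

set_option maxSynthPendingDepth 3 in
set_option maxHeartbeats 1000000 in
/-- For `m ≤ n` and `ι` the standard inclusion `ℂ^m → ℂ^n`, the stabilizer of `ι` in
the group `G(n)` of `ℂ`-linear isometric equivalences of `EuclideanSpace ℂ (Fin n)` (acting
by postcomposition) is isomorphic, as a group, to the group `G(n - m)` of linear
isometric equivalences of `EuclideanSpace ℂ (Fin (n - m))`. -/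
theorem stabilizer_of_standard_inclusion_iso (m n : ℕ) (hmn : m ≤ n)
    (ι : EuclideanSpace ℂ (Fin m) →ₗᵢ[ℂ] EuclideanSpace ℂ (Fin n))
    (hι : ∀ (x : EuclideanSpace ℂ (Fin m)) (i : Fin n),
      ι x i = if h : (i : ℕ) < m then x ⟨(i : ℕ), h⟩ else 0) :
    Nonempty ((stabilizerOfInclusion ι) ≃*
      (EuclideanSpace ℂ (Fin (n - m)) ≃ₗᵢ[ℂ] EuclideanSpace ℂ (Fin (n - m)))) := by
  have hdim : Module.finrank ℂ (LinearMap.range ι.toLinearMap)ᗮ = n - m := by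
    have h1 : Module.finrank ℂ (LinearMap.range ι.toLinearMap) = m := by
      rw [LinearMap.finrank_range_of_inj ι.injective, finrank_euclideanSpace_fin]
    have h2 : Module.finrank ℂ (LinearMap.range ι.toLinearMap)
        + Module.finrank ℂ (LinearMap.range ι.toLinearMap)ᗮ
        = Module.finrank ℂ (EuclideanSpace ℂ (Fin n)) :=
      Submodule.finrank_add_finrank_orthogonal _
    have h3 : Module.finrank ℂ (EuclideanSpace ℂ (Fin n)) = n := finrank_euclideanSpace_fin
    omega
  exact ⟨(stabMulEquiv ι).trans (conjIso (euclIso hdim))⟩
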